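/- Let G be a group and H a subgroup of G. Then H is characteristic in G if and only if there exist a functor F : Core Grp ⥤ Grp and a natural transformation ι : F ⟶ Core.inclusion (where Core.inclusion : Core Grp ⥤ Grp is the inclusion of the core) such that H equals the range of the underlying group homomorphism of the component ι.app G : F.obj G ⟶ G. -/

import Mathlib

open CategoryTheory

/-- The "characteristic closure along isomorphisms from `G`" in any group `X`. -/
def coreChar (G : GrpCat) (H : Subgroup G) (X : GrpCat) : Subgroup X :=
  ⨆ e : G ≃* X, H.map e.toMonoidHom

lemma coreChar_map_le (G : GrpCat) (H : Subgroup G) {X Y : GrpCat} (f : X ≅ Y) :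
    (coreChar G H X).map f.hom.hom ≤ coreChar G H Y := by
  rw [coreChar, (Subgroup.gc_map_comap f.hom.hom).l_iSup]
  refine iSup_le fun e => ?_
  rw [Subgroup.map_map]
  exact le_iSup_of_le (e.trans f.groupIsoToMulEquiv) (le_of_eq rfl)

/-- The map on characteristic closures induced by an isomorphism. -/
def coreCharMap (G : GrpCat) (H : Subgroup G) {X Y : GrpCat} (f : X ≅ Y) :
    GrpCat.of (coreChar G H X) ⟶ GrpCat.of (coreChar G H Y) :=
  GrpCat.ofHom ((f.hom.hom.domRestrict (coreChar G H X)).codRestrict _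
    (fun x => coreChar_map_le G H f ⟨x, x.2, rfl⟩))

theorem characteristic_iff_counital (G : GrpCat) (H : Subgroup G) :
    H.Characteristic ↔
      ∃ (F : Core GrpCat ⥤ GrpCat) (ι : F ⟶ Core.inclusion GrpCat),
        H = MonoidHom.range (ι.app (show Core GrpCat from ⟨G⟩)).hom := by
  constructor
  · intro hchar
    refine ⟨{ obj := fun X => GrpCat.of (coreChar G H X.of),
              map := fun {X Y} f => coreCharMap G H f.iso,
              map_id := fun X => by ext x; rfl,
              map_comp := fun f g => by ext x; rfl },
            { app := fun X => GrpCat.ofHom (coreChar G H X.of).subtype,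
              naturality := fun X Y f => by ext x; rfl }, ?_⟩
    have key : coreChar G H G = H := by
      rw [coreChar]
      have h : ∀ e : G ≃* G, H.map e.toMonoidHom = H :=
        Subgroup.characteristic_iff_map_eq.mp hchar
      simp only [h]
      exact iSup_const
    exact key.symm.trans (Subgroup.range_subtype _).symm
  · rintro ⟨F, ι, rfl⟩
    refine Subgroup.characteristic_iff_map_le.mpr ?_
    intro φ
    rintro _ ⟨x, ⟨z, rfl⟩, rfl⟩
    let c : (show Core GrpCat from ⟨G⟩) ⟶ (show Core GrpCat from ⟨G⟩) := ⟨φ.toGrpIso⟩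
    have hnat := ι.naturality c
    have h2 := congrArg (fun f => f.hom z) hnat
    exact ⟨(F.map c).hom z, h2⟩
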